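/- Let F be a monic real polynomial of degree n ≥ 1 with σ_k defined by F(X) = ∑_{k=0}^{n} (-1)^k σ_k X^{n-k} (σ₀ = 1), let ν ∈ ℝ, and let β₀, β₁, …, β_n, x be smooth functions on an open interval I satisfying: β₀ = ν (constant); β_{k+1}′ = −a β_k′ − (1/2) β_k + σ_k x′ for 0 ≤ k ≤ n−1; and 0 = −a β_n′ − (1/2) β_n + σ_n x′. Define x̄(a) = x(a) − (ν/2) a and β̄_k = β_k − ν σ_k for 1 ≤ k ≤ n. Then: β̄₁′ = x̄′; β̄_{k+1}′ = −a β̄_k′ − (1/2) β̄_k + σ_k x̄′ for 1 ≤ k ≤ n−1; and 0 = −a β̄_n′ − (1/2) β̄_n + σ_n x̄′. -/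

import Mathlib

open Polynomial

/-- For a polynomial `Q` of degree `d` written as `Q(X) = ∑_{k=0}^{d} (-1)^k σ_k X^{d-k}`,
`sig d Q k` is the coefficient `σ_k`, extended by `0` outside `0 ≤ k ≤ d`. -/
noncomputable def sig (d : ℕ) (Q : Polynomial ℝ) (k : ℤ) : ℝ :=
  if 0 ≤ k ∧ k ≤ (d : ℤ) then (-1 : ℝ) ^ k * Q.coeff (d - k.toNat) else 0

/-- Structural relation between the coefficient systems for odd-degree and
even-degree integrals: if `β₀ = ν`, `β_{k+1}′ = −a β_k′ − (1/2) β_k + σ_k x′` for `0 ≤ k ≤ n−1`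
and `0 = −a β_n′ − (1/2) β_n + σ_n x′` on `I`, then `x̄(a) = x(a) − (ν/2)a` and
`β̄_k = β_k − ν σ_k` satisfy the corresponding system: `β̄₁′ = x̄′`,
`β̄_{k+1}′ = −a β̄_k′ − (1/2) β̄_k + σ_k x̄′` for `1 ≤ k ≤ n−1`, and
`0 = −a β̄_n′ − (1/2) β̄_n + σ_n x̄′`. -/
theorem stmt11 (n : ℕ) (hn : 1 ≤ n) (F : Polynomial ℝ) (hmonic : F.Monic)
    (hdeg : F.natDegree = n) (ν : ℝ)
    (I : Set ℝ) (hIopen : IsOpen I) (hIconn : I.OrdConnected)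
    (β : ℕ → ℝ → ℝ) (x : ℝ → ℝ)
    (hβs : ∀ k ≤ n, ContDiffOn ℝ (⊤ : ℕ∞) (β k) I) (hxs : ContDiffOn ℝ (⊤ : ℕ∞) x I)
    (hβ0 : ∀ a ∈ I, β 0 a = ν)
    (hrec : ∀ k : ℕ, k ≤ n - 1 → ∀ a ∈ I,
      derivWithin (β (k + 1)) I a =
        -a * derivWithin (β k) I a - (1/2) * β k a + sig n F (k : ℤ) * derivWithin x I a)
    (hlast : ∀ a ∈ I,
      0 = -a * derivWithin (β n) I a - (1/2) * β n a + sig n F (n : ℤ) * derivWithin x I a) :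
    (∀ a ∈ I,
      derivWithin (fun t => β 1 t - ν * sig n F 1) I a =
        derivWithin (fun t => x t - ν / 2 * t) I a) ∧
    (∀ k : ℕ, 1 ≤ k → k ≤ n - 1 → ∀ a ∈ I,
      derivWithin (fun t => β (k + 1) t - ν * sig n F ((k : ℤ) + 1)) I a =
        -a * derivWithin (fun t => β k t - ν * sig n F (k : ℤ)) I a -
          (1/2) * (β k a - ν * sig n F (k : ℤ)) +
          sig n F (k : ℤ) * derivWithin (fun t => x t - ν / 2 * t) I a) ∧
    (∀ a ∈ I,
      0 = -a * derivWithin (fun t => β n t - ν * sig n F (n : ℤ)) I a -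
          (1/2) * (β n a - ν * sig n F (n : ℤ)) +
          sig n F (n : ℤ) * derivWithin (fun t => x t - ν / 2 * t) I a) := by
  have hUD : UniqueDiffOn ℝ I := hIopen.uniqueDiffOn
  have hc : F.coeff n = 1 := by rw [← hdeg]; exact hmonic.coeff_natDegree
  have hsig0 : sig n F ((0 : ℕ) : ℤ) = 1 := by simp [sig, hc]
  have hsub : ∀ (f : ℝ → ℝ) (c : ℝ), ∀ a ∈ I,
      derivWithin (fun t => f t - c) I a = derivWithin f I a := by
    intro f c a ha
    exact derivWithin_sub_const c
  have hxbar : ∀ a ∈ I, derivWithin (fun t => x t - ν / 2 * t) I a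
      = derivWithin x I a - ν / 2 := by
    intro a ha
    have hx' : DifferentiableWithinAt ℝ x I a :=
      (hxs.differentiableOn (by simp)) a ha
    have hlin : HasDerivWithinAt (fun t : ℝ => ν / 2 * t) (ν / 2) I a := by
      simpa using (hasDerivWithinAt_id a I).const_mul (ν / 2)
    have := (hx'.hasDerivWithinAt.sub hlin).derivWithin (hUD a ha)
    exact this
  have hβ0' : ∀ a ∈ I, derivWithin (β 0) I a = 0 := by
    intro a ha
    have : derivWithin (β 0) I a = derivWithin (fun _ : ℝ => ν) I a :=
      derivWithin_congr (fun y hy => hβ0 y hy) (hβ0 a ha)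
    rw [this]
    exact congrFun (derivWithin_const I ν) a
  refine ⟨?_, ?_, ?_⟩
  · intro a ha
    rw [hsub _ _ a ha, hxbar a ha, hrec 0 (Nat.zero_le _) a ha,
      hβ0' a ha, hβ0 a ha, hsig0]
    ring
  · intro k hk1 hk2 a ha
    have h1 : derivWithin (fun t => β (k + 1) t - ν * sig n F ((k : ℤ) + 1)) I a
        = derivWithin (β (k + 1)) I a := hsub _ _ a ha
    have h2 : derivWithin (fun t => β k t - ν * sig n F (k : ℤ)) I a
        = derivWithin (β k) I a := hsub _ _ a ha
    rw [h1, h2, hxbar a ha, hrec k hk2 a ha]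
    ring
  · intro a ha
    rw [hsub _ _ a ha, hxbar a ha]
    have := hlast a ha
    linarith [hlast a ha]
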